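/- Let y1, y2 > 0, y2 > 1, h = sqrt(y1+y2-y1y2) > 0. Then lim_{r↓1} (1/(2πi)) ∮_{|ξ|=1} y1 · [y2(1+hrξ)(1+h/(rξ))/((y2+hrξ)(y2+h/(rξ)))] · ((1-y2)^2 h / y2^3) · ξ/(ξ + h/(y2 r))^3 dξ = y1^2 y2^2 h^2/(y1+y2)^4. -/

import Mathlib

open Filter

set_option maxHeartbeats 3000000

private lemma div4' (a b c d : ℂ) (hb : b ≠ 0) (hc : c ≠ 0) (hd : d ≠ 0) :
    (a/b)/(c/d) = a*d/(b*c) := by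
  field_simp

private lemma dec12 (Y1 Y2 H R ξ : ℂ) (hY2 : Y2 ≠ 0) (hH : H ≠ 0) (hR : R ≠ 0)
    (hξ : ξ ≠ 0) (h1 : Y2 + H*R*ξ ≠ 0) (h2 : Y2*R*ξ + H ≠ 0) (hm : Y2^2 - H^2 ≠ 0) :
    Y1 * (Y2*(1+H*R*ξ)*(1+H/(R*ξ))/((Y2+H*R*ξ)*(Y2+H/(R*ξ)))) * ((1-Y2)^2*H/Y2^3) *
      (ξ/(ξ+H/(Y2*R))^3)
    = ((-1*Y1*H^5 + Y1*Y2*H^3 + 3*Y1*Y2*H^5 + -3*Y1*Y2^2*H^3 + -3*Y1*Y2^2*H^5 + 3*Y1*Y2^3*H^3 + Y1*Y2^3*H^5 + -1*Y1*Y2^4*H^3)/(Y2^5*R^2*(Y2^2-H^2)))/(ξ+H/(Y2*R))^4 + (((-2*Y1*H^6 + Y1*Y2*H^4 + 5*Y1*Y2*H^6 + Y1*Y2^2*H^4 + -4*Y1*Y2^2*H^6 + -2*Y1*Y2^3*H^2 + -7*Y1*Y2^3*H^4 + Y1*Y2^3*H^6 + 5*Y1*Y2^4*H^2 + 7*Y1*Y2^4*H^4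 + -4*Y1*Y2^5*H^2 + -2*Y1*Y2^5*H^4 + Y1*Y2^6*H^2)/(Y2^4*R*(Y2^2-H^2)^2))/(ξ+H/(Y2*R))^3 + (((-1*Y1*H^7 + 2*Y1*Y2*H^7 + 3*Y1*Y2^2*H^5 + -1*Y1*Y2^2*H^7 + -6*Y1*Y2^3*H^5 + -4*Y1*Y2^4*H^3 + 3*Y1*Y2^4*H^5 + Y1*Y2^5*H + 9*Y1*Y2^5*H^3 + -2*Y1*Y2^6*H + -6*Y1*Y2^6*H^3 + Y1*Y2^7*H + Y1*Y2^7*H^3)/(Y2^3*(Y2^2-H^2)^3))/(ξ+H/(Y2*R))^2 +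
      (((Y1*Y2^2*H^4*R + -1*Y1*Y2^3*H^2*R + -3*Y1*Y2^3*H^4*R + 3*Y1*Y2^4*H^2*R + 3*Y1*Y2^4*H^4*R + -3*Y1*Y2^5*H^2*R + -1*Y1*Y2^5*H^4*R + Y1*Y2^6*H^2*R)/((Y2^2-H^2)^4))/(ξ+H/(Y2*R)) + ((-1*Y1*Y2^2*H^4*R + Y1*Y2^3*H^2*R + 3*Y1*Y2^3*H^4*R + -3*Y1*Y2^4*H^2*R + -3*Y1*Y2^4*H^4*R + 3*Y1*Y2^5*H^2*R + Y1*Y2^5*H^4*R + -1*Y1*Y2^6*H^2*R)/((Y2^2-H^2)^4))/(ξ+Y2/(H*R))))) := by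
  have hRξ : R*ξ ≠ 0 := mul_ne_zero hR hξ
  have hY2R : Y2*R ≠ 0 := mul_ne_zero hY2 hR
  have hHR : H*R ≠ 0 := mul_ne_zero hH hR
  have e1 : 1 + H/(R*ξ) = (R*ξ+H)/(R*ξ) := by field_simp
  have e2 : Y2 + H/(R*ξ) = (Y2*R*ξ+H)/(R*ξ) := by field_simp
  have e3 : ξ + H/(Y2*R) = (Y2*R*ξ+H)/(Y2*R) := by field_simp
  have e4 : ξ + Y2/(H*R) = (Y2+H*R*ξ)/(H*R) := by field_simp; ring
  have hDL : (Y2+H*R*ξ)*(Y2*R*ξ+H)^4 ≠ 0 := mul_ne_zero h1 (pow_ne_zero 4 h2)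
  have hDE : (Y2^5*R^2*(Y2^2-H^2)) ≠ 0 := by
    exact mul_ne_zero (mul_ne_zero (pow_ne_zero 5 hY2) (pow_ne_zero 2 hR)) hm
  have hDD : (Y2^4*R*(Y2^2-H^2)^2) ≠ 0 := by
    exact mul_ne_zero (mul_ne_zero (pow_ne_zero 4 hY2) hR) (pow_ne_zero 2 hm)
  have hDB : (Y2^3*(Y2^2-H^2)^3) ≠ 0 := mul_ne_zero (pow_ne_zero 3 hY2) (pow_ne_zero 3 hm)
  have hDA : ((Y2^2-H^2)^4) ≠ 0 := pow_ne_zero 4 hm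
  have hDR : Y2^5*R^2*(Y2^2-H^2)^4*(Y2*R*ξ+H)^4*(H*R)*(Y2+H*R*ξ) ≠ 0 := by
    refine mul_ne_zero (mul_ne_zero (mul_ne_zero (mul_ne_zero (mul_ne_zero ?_ ?_) ?_) ?_) ?_) h1
    · exact pow_ne_zero 5 hY2
    · exact pow_ne_zero 2 hR
    · exact pow_ne_zero 4 hm
    · exact pow_ne_zero 4 h2
    · exact hHR
  have hLHS : Y1 * (Y2*(1+H*R*ξ)*(1+H/(R*ξ))/((Y2+H*R*ξ)*(Y2+H/(R*ξ)))) * ((1-Y2)^2*H/Y2^3) *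
      (ξ/(ξ+H/(Y2*R))^3)
      = (Y1*(1-Y2)^2*H*Y2*R^3*((1+H*R*ξ)*(R*ξ+H)*ξ)) / ((Y2+H*R*ξ)*(Y2*R*ξ+H)^4) := by
    rw [e1, e2, e3]
    field_simp
  have hT4 : ((-1*Y1*H^5 + Y1*Y2*H^3 + 3*Y1*Y2*H^5 + -3*Y1*Y2^2*H^3 + -3*Y1*Y2^2*H^5 + 3*Y1*Y2^3*H^3 + Y1*Y2^3*H^5 + -1*Y1*Y2^4*H^3)/(Y2^5*R^2*(Y2^2-H^2)))/(ξ+H/(Y2*R))^4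
      = ((-1*Y1*H^5 + Y1*Y2*H^3 + 3*Y1*Y2*H^5 + -3*Y1*Y2^2*H^3 + -3*Y1*Y2^2*H^5 + 3*Y1*Y2^3*H^3 + Y1*Y2^3*H^5 + -1*Y1*Y2^4*H^3)*(Y2*R)^4*((Y2^2-H^2)^3*(H*R)*(Y2+H*R*ξ))) / (Y2^5*R^2*(Y2^2-H^2)^4*(Y2*R*ξ+H)^4*(H*R)*(Y2+H*R*ξ)) := by
    rw [e3, div_pow, div4' _ _ _ _ hDE (pow_ne_zero 4 h2) (pow_ne_zero 4 hY2R)]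
    rw [div_eq_div_iff (mul_ne_zero hDE (pow_ne_zero 4 h2)) hDR]
    ring
  have hT3 : ((-2*Y1*H^6 + Y1*Y2*H^4 + 5*Y1*Y2*H^6 + Y1*Y2^2*H^4 + -4*Y1*Y2^2*H^6 + -2*Y1*Y2^3*H^2 + -7*Y1*Y2^3*H^4 + Y1*Y2^3*H^6 + 5*Y1*Y2^4*H^2 + 7*Y1*Y2^4*H^4 + -4*Y1*Y2^5*H^2 + -2*Y1*Y2^5*H^4 + Y1*Y2^6*H^2)/(Y2^4*R*(Y2^2-H^2)^2))/(ξ+H/(Y2*R))^3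
      = ((-2*Y1*H^6 + Y1*Y2*H^4 + 5*Y1*Y2*H^6 + Y1*Y2^2*H^4 + -4*Y1*Y2^2*H^6 + -2*Y1*Y2^3*H^2 + -7*Y1*Y2^3*H^4 + Y1*Y2^3*H^6 + 5*Y1*Y2^4*H^2 + 7*Y1*Y2^4*H^4 + -4*Y1*Y2^5*H^2 + -2*Y1*Y2^5*H^4 + Y1*Y2^6*H^2)*(Y2*R)^3*(Y2*R*(Y2^2-H^2)^2*(Y2*R*ξ+H)*(H*R)*(Y2+H*R*ξ))) / (Y2^5*R^2*(Y2^2-H^2)^4*(Y2*R*ξ+H)^4*(H*R)*(Y2+H*R*ξ)) := by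
    rw [e3, div_pow, div4' _ _ _ _ hDD (pow_ne_zero 3 h2) (pow_ne_zero 3 hY2R)]
    rw [div_eq_div_iff (mul_ne_zero hDD (pow_ne_zero 3 h2)) hDR]
    ring
  have hT2 : ((-1*Y1*H^7 + 2*Y1*Y2*H^7 + 3*Y1*Y2^2*H^5 + -1*Y1*Y2^2*H^7 + -6*Y1*Y2^3*H^5 + -4*Y1*Y2^4*H^3 + 3*Y1*Y2^4*H^5 + Y1*Y2^5*H + 9*Y1*Y2^5*H^3 + -2*Y1*Y2^6*H + -6*Y1*Y2^6*H^3 + Y1*Y2^7*H + Y1*Y2^7*H^3)/(Y2^3*(Y2^2-H^2)^3))/(ξ+H/(Y2*R))^2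
      = ((-1*Y1*H^7 + 2*Y1*Y2*H^7 + 3*Y1*Y2^2*H^5 + -1*Y1*Y2^2*H^7 + -6*Y1*Y2^3*H^5 + -4*Y1*Y2^4*H^3 + 3*Y1*Y2^4*H^5 + Y1*Y2^5*H + 9*Y1*Y2^5*H^3 + -2*Y1*Y2^6*H + -6*Y1*Y2^6*H^3 + Y1*Y2^7*H + Y1*Y2^7*H^3)*(Y2*R)^2*(Y2^2*R^2*(Y2^2-H^2)*(Y2*R*ξ+H)^2*(H*R)*(Y2+H*R*ξ))) / (Y2^5*R^2*(Y2^2-H^2)^4*(Y2*R*ξ+H)^4*(H*R)*(Y2+H*R*ξ)) := by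
    rw [e3, div_pow, div4' _ _ _ _ hDB (pow_ne_zero 2 h2) (pow_ne_zero 2 hY2R)]
    rw [div_eq_div_iff (mul_ne_zero hDB (pow_ne_zero 2 h2)) hDR]
    ring
  have hT1 : ((Y1*Y2^2*H^4*R + -1*Y1*Y2^3*H^2*R + -3*Y1*Y2^3*H^4*R + 3*Y1*Y2^4*H^2*R + 3*Y1*Y2^4*H^4*R + -3*Y1*Y2^5*H^2*R + -1*Y1*Y2^5*H^4*R + Y1*Y2^6*H^2*R)/((Y2^2-H^2)^4))/(ξ+H/(Y2*R))
      = ((Y1*Y2^2*H^4*R + -1*Y1*Y2^3*H^2*R + -3*Y1*Y2^3*H^4*R + 3*Y1*Y2^4*H^2*R + 3*Y1*Y2^4*H^4*R + -3*Y1*Y2^5*H^2*R + -1*Y1*Y2^5*H^4*R + Y1*Y2^6*H^2*R)*(Y2*R)*(Y2^5*R^2*(Y2*R*ξ+H)^3*(H*R)*(Y2+H*R*ξ))) / (Y2^5*R^2*(Y2^2-H^2)^4*(Y2*R*ξ+H)^4*(H*R)*(Y2+H*R*ξ)) := by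
    rw [e3, div4' _ _ _ _ hDA h2 hY2R]
    rw [div_eq_div_iff (mul_ne_zero hDA h2) hDR]
    ring
  have hT0 : ((-1*Y1*Y2^2*H^4*R + Y1*Y2^3*H^2*R + 3*Y1*Y2^3*H^4*R + -3*Y1*Y2^4*H^2*R + -3*Y1*Y2^4*H^4*R + 3*Y1*Y2^5*H^2*R + Y1*Y2^5*H^4*R + -1*Y1*Y2^6*H^2*R)/((Y2^2-H^2)^4))/(ξ+Y2/(H*R))
      = ((-1*Y1*Y2^2*H^4*R + Y1*Y2^3*H^2*R + 3*Y1*Y2^3*H^4*R + -3*Y1*Y2^4*H^2*R + -3*Y1*Y2^4*H^4*R + 3*Y1*Y2^5*H^2*R + Y1*Y2^5*H^4*R + -1*Y1*Y2^6*H^2*R)*(H*R)*(Y2^5*R^2*(Y2*R*ξ+H)^4*(H*R))) / (Y2^5*R^2*(Y2^2-H^2)^4*(Y2*R*ξ+H)^4*(H*R)*(Y2+H*R*ξ)) := by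
    rw [e4, div4' _ _ _ _ hDA h1 hHR]
    rw [div_eq_div_iff (mul_ne_zero hDA h1) hDR]
    ring
  rw [hLHS, hT4, hT3, hT2, hT1, hT0]
  simp only [← add_div]
  rw [div_eq_div_iff hDL hDR]
  ring

open Metric Set Complex in
private lemma circleIntegral_add' {f g : ℂ → ℂ} {c : ℂ} {R : ℝ}
    (hf : CircleIntegrable f c R) (hg : CircleIntegrable g c R) :
    (∮ z in C(c, R), (f z + g z)) = (∮ z in C(c, R), f z) + ∮ z in C(c, R), g z := by
  simp only [circleIntegral, smul_add, intervalIntegral.integral_add hf.out hg.out]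

set_option maxHeartbeats 1000000 in
open Metric Set Complex in
private lemma key12 (y1 y2 h r : ℝ) (hy1 : 0 < y1) (hy2 : 1 < y2) (hhpos : 0 < h)
    (hh2 : h ^ 2 = y1 + y2 - y1 * y2) (hr : 1 < r) (hry : h * r < y2) :
    (1 / (2 * (Real.pi : ℂ) * Complex.I)) *
        (∮ ξ in C((0 : ℂ), 1),
          (y1 : ℂ) *
          ((y2 : ℂ) * (1 + (h : ℂ) * (r : ℂ) * ξ) * (1 + (h : ℂ) / ((r : ℂ) * ξ)) /
            (((y2 : ℂ) + (h : ℂ) * (r : ℂ) * ξ) * ((y2 : ℂ) + (h : ℂ) / ((r : ℂ) * ξ)))) *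
          (((1 - y2) ^ 2 * h / y2 ^ 3 : ℝ) : ℂ) *
          (ξ / (ξ + (h : ℂ) / ((y2 : ℂ) * (r : ℂ))) ^ 3))
      = (r : ℂ) * ((y1 ^ 2 * y2 ^ 2 * h ^ 2 / (y1 + y2) ^ 4 : ℝ) : ℂ) := by
  have hy2' : (0:ℝ) < y2 := by linarith
  have hr0 : (0:ℝ) < r := by linarith
  have hhy2 : h < y2 := by nlinarith
  have hhr : h < y2 * r := by nlinarith
  have hH : (h:ℂ) ≠ 0 := Complex.ofReal_ne_zero.2 hhpos.ne'
  have hY2 : (y2:ℂ) ≠ 0 := Complex.ofReal_ne_zero.2 hy2'.ne'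
  have hR : (r:ℂ) ≠ 0 := Complex.ofReal_ne_zero.2 hr0.ne'
  have hm2R : (0:ℝ) < y2^2 - h^2 := by nlinarith
  have hm2 : (y2:ℂ)^2 - (h:ℂ)^2 ≠ 0 := by
    have h0 : ((y2^2 - h^2 : ℝ) : ℂ) ≠ 0 := Complex.ofReal_ne_zero.2 hm2R.ne'
    push_cast at h0; exact h0
  set a : ℂ := -((h:ℂ)/((y2:ℂ)*(r:ℂ))) with ha
  set b : ℂ := -((y2:ℂ)/((h:ℂ)*(r:ℂ))) with hb
  have haR : a = ((-(h/(y2*r)) : ℝ) : ℂ) := by rw [ha]; push_cast; ring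
  have hbR : b = ((-(y2/(h*r)) : ℝ) : ℂ) := by rw [hb]; push_cast; ring
  have habs_a : ‖a‖ < 1 := by
    rw [haR, Complex.norm_real, Real.norm_eq_abs, abs_neg, abs_of_pos (by positivity)]
    rw [div_lt_one (by positivity)]; exact hhr
  have hmem_a : a ∈ ball (0:ℂ) 1 := by
    simpa [mem_ball, Complex.dist_eq] using habs_a
  have hsph_a : a ∉ sphere (0:ℂ) |(1:ℝ)| := by
    simp only [mem_sphere_iff_norm, sub_zero, abs_one]
    exact habs_a.ne
  have habs_b : 1 < ‖b‖ := by
    rw [hbR, Complex.norm_real, Real.norm_eq_abs, abs_neg, abs_of_pos (by positivity)]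
    rw [lt_div_iff₀ (by positivity)]; linarith
  have hsph_b : b ∉ sphere (0:ℂ) |(1:ℝ)| := by
    simp only [mem_sphere_iff_norm, sub_zero, abs_one]
    exact habs_b.ne'
  set CE : ℂ := ((-1*(y1:ℂ)*(h:ℂ)^5 + (y1:ℂ)*(y2:ℂ)*(h:ℂ)^3 + 3*(y1:ℂ)*(y2:ℂ)*(h:ℂ)^5 + -3*(y1:ℂ)*(y2:ℂ)^2*(h:ℂ)^3 + -3*(y1:ℂ)*(y2:ℂ)^2*(h:ℂ)^5 + 3*(y1:ℂ)*(y2:ℂ)^3*(h:ℂ)^3 + (y1:ℂ)*(y2:ℂ)^3*(h:ℂ)^5 + -1*(y1:ℂ)*(y2:ℂ)^4*(h:ℂ)^3)/((y2:ℂ)^5*(r:ℂ)^2*((y2:ℂ)^2-(h:ℂ)^2))) with hCE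
  set CD : ℂ := ((-2*(y1:ℂ)*(h:ℂ)^6 + (y1:ℂ)*(y2:ℂ)*(h:ℂ)^4 + 5*(y1:ℂ)*(y2:ℂ)*(h:ℂ)^6 + (y1:ℂ)*(y2:ℂ)^2*(h:ℂ)^4 + -4*(y1:ℂ)*(y2:ℂ)^2*(h:ℂ)^6 + -2*(y1:ℂ)*(y2:ℂ)^3*(h:ℂ)^2 + -7*(y1:ℂ)*(y2:ℂ)^3*(h:ℂ)^4 + (y1:ℂ)*(y2:ℂ)^3*(h:ℂ)^6 + 5*(y1:ℂ)*(y2:ℂ)^4*(h:ℂ)^2 + 7*(y1:ℂ)*(y2:ℂ)^4*(h:ℂ)^4 + -4*(y1:ℂ)*(y2:ℂ)^5*(h:ℂ)^2 + -2*(y1:ℂ)*(y2:ℂ)^5*(h:ℂ)^4 + (y1:ℂ)*(y2:ℂ)^6*(h:ℂ)^2)/((y2:ℂ)^4*(r:ℂ)*((y2:ℂ)^2-(h:ℂ)^2)^2)) with hCD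
  set CB : ℂ := ((-1*(y1:ℂ)*(h:ℂ)^7 + 2*(y1:ℂ)*(y2:ℂ)*(h:ℂ)^7 + 3*(y1:ℂ)*(y2:ℂ)^2*(h:ℂ)^5 + -1*(y1:ℂ)*(y2:ℂ)^2*(h:ℂ)^7 + -6*(y1:ℂ)*(y2:ℂ)^3*(h:ℂ)^5 + -4*(y1:ℂ)*(y2:ℂ)^4*(h:ℂ)^3 + 3*(y1:ℂ)*(y2:ℂ)^4*(h:ℂ)^5 + (y1:ℂ)*(y2:ℂ)^5*(h:ℂ) + 9*(y1:ℂ)*(y2:ℂ)^5*(h:ℂ)^3 + -2*(y1:ℂ)*(y2:ℂ)^6*(h:ℂ) + -6*(y1:ℂ)*(y2:ℂ)^6*(h:ℂ)^3 + (y1:ℂ)*(y2:ℂ)^7*(h:ℂ) + (y1:ℂ)*(y2:ℂ)^7*(h:ℂ)^3)/((y2:ℂ)^3*((y2:ℂ)^2-(h:ℂ)^2)^3)) with hCB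
  set CA : ℂ := (((y1:ℂ)*(y2:ℂ)^2*(h:ℂ)^4*(r:ℂ) + -1*(y1:ℂ)*(y2:ℂ)^3*(h:ℂ)^2*(r:ℂ) + -3*(y1:ℂ)*(y2:ℂ)^3*(h:ℂ)^4*(r:ℂ) + 3*(y1:ℂ)*(y2:ℂ)^4*(h:ℂ)^2*(r:ℂ) + 3*(y1:ℂ)*(y2:ℂ)^4*(h:ℂ)^4*(r:ℂ) + -3*(y1:ℂ)*(y2:ℂ)^5*(h:ℂ)^2*(r:ℂ) + -1*(y1:ℂ)*(y2:ℂ)^5*(h:ℂ)^4*(r:ℂ) + (y1:ℂ)*(y2:ℂ)^6*(h:ℂ)^2*(r:ℂ))/(((y2:ℂ)^2-(h:ℂ)^2)^4)) with hCA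
  set CG : ℂ := ((-1*(y1:ℂ)*(y2:ℂ)^2*(h:ℂ)^4*(r:ℂ) + (y1:ℂ)*(y2:ℂ)^3*(h:ℂ)^2*(r:ℂ) + 3*(y1:ℂ)*(y2:ℂ)^3*(h:ℂ)^4*(r:ℂ) + -3*(y1:ℂ)*(y2:ℂ)^4*(h:ℂ)^2*(r:ℂ) + -3*(y1:ℂ)*(y2:ℂ)^4*(h:ℂ)^4*(r:ℂ) + 3*(y1:ℂ)*(y2:ℂ)^5*(h:ℂ)^2*(r:ℂ) + (y1:ℂ)*(y2:ℂ)^5*(h:ℂ)^4*(r:ℂ) + -1*(y1:ℂ)*(y2:ℂ)^6*(h:ℂ)^2*(r:ℂ))/(((y2:ℂ)^2-(h:ℂ)^2)^4)) with hCG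
  have heq : Set.EqOn
      (fun ξ : ℂ =>
          (y1 : ℂ) *
          ((y2 : ℂ) * (1 + (h : ℂ) * (r : ℂ) * ξ) * (1 + (h : ℂ) / ((r : ℂ) * ξ)) /
            (((y2 : ℂ) + (h : ℂ) * (r : ℂ) * ξ) * ((y2 : ℂ) + (h : ℂ) / ((r : ℂ) * ξ)))) *
          (((1 - y2) ^ 2 * h / y2 ^ 3 : ℝ) : ℂ) *
          (ξ / (ξ + (h : ℂ) / ((y2 : ℂ) * (r : ℂ))) ^ 3))
      (fun ξ : ℂ => CE/(ξ - a)^4 + (CD/(ξ - a)^3 + (CB/(ξ - a)^2 +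
          (CA/(ξ - a) + CG/(ξ - b)))))
      (sphere (0:ℂ) 1) := by
    intro ξ hξ
    have hξ1 : ‖ξ‖ = 1 := by simpa using hξ
    have hξ0 : ξ ≠ 0 := by intro hc; rw [hc] at hξ1; simp at hξ1
    have hden1 : (y2:ℂ) + (h:ℂ)*(r:ℂ)*ξ ≠ 0 := by
      intro hc
      have h0 : (h:ℂ)*(r:ℂ)*ξ = -(y2:ℂ) := by linear_combination hc
      have h1 : ‖(h:ℂ)*(r:ℂ)*ξ‖ = ‖-(y2:ℂ)‖ := by rw [h0]
      simp only [norm_mul, norm_neg, Complex.norm_real, Real.norm_eq_abs, hξ1, mul_one] at h1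
      rw [abs_of_pos hhpos, abs_of_pos hr0, abs_of_pos hy2'] at h1
      exact absurd h1 hry.ne
    have hden2 : (y2:ℂ)*(r:ℂ)*ξ + (h:ℂ) ≠ 0 := by
      intro hc
      have h0 : (y2:ℂ)*(r:ℂ)*ξ = -(h:ℂ) := by linear_combination hc
      have h1 : ‖(y2:ℂ)*(r:ℂ)*ξ‖ = ‖-(h:ℂ)‖ := by rw [h0]
      simp only [norm_mul, norm_neg, Complex.norm_real, Real.norm_eq_abs, hξ1, mul_one] at h1
      rw [abs_of_pos hhpos, abs_of_pos hr0, abs_of_pos hy2'] at h1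
      exact absurd h1.symm hhr.ne
    have hxa : ξ - a = ξ + (h:ℂ)/((y2:ℂ)*(r:ℂ)) := by rw [ha]; ring
    have hxb : ξ - b = ξ + (y2:ℂ)/((h:ℂ)*(r:ℂ)) := by rw [hb]; ring
    simp only
    rw [hxa, hxb, hCE, hCD, hCB, hCA, hCG]
    have hlhs : ((((1 - y2) ^ 2 * h / y2 ^ 3 : ℝ)) : ℂ)
        = ((1:ℂ)-(y2:ℂ))^2*(h:ℂ)/(y2:ℂ)^3 := by push_cast; ring
    rw [hlhs]
    exact dec12 (y1:ℂ) (y2:ℂ) (h:ℂ) (r:ℂ) ξ hY2 hH hR hξ0 hden1 hden2 hm2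
  have hci : ∀ (w : ℂ), w ∉ sphere (0:ℂ) |(1:ℝ)| → ∀ (n : ℤ) (cst : ℂ),
      CircleIntegrable (fun z : ℂ => cst * (z - w)^n) 0 1 := by
    intro w hw n cst
    have hbase : CircleIntegrable (fun z : ℂ => (z - w)^n) 0 1 :=
      circleIntegrable_sub_zpow_iff.2 (Or.inr (Or.inr hw))
    exact IntervalIntegrable.const_mul hbase cst
  have e4 : ∀ z : ℂ, CE/(z-a)^4 = CE * (z-a)^(-4:ℤ) := by
    intro z
    have hc : ((z-a)^(4:ℕ) : ℂ) = (z-a)^(4:ℤ) := by norm_cast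
    rw [div_eq_mul_inv, zpow_neg, ← hc]
  have e3 : ∀ z : ℂ, CD/(z-a)^3 = CD * (z-a)^(-3:ℤ) := by
    intro z
    have hc : ((z-a)^(3:ℕ) : ℂ) = (z-a)^(3:ℤ) := by norm_cast
    rw [div_eq_mul_inv, zpow_neg, ← hc]
  have e2 : ∀ z : ℂ, CB/(z-a)^2 = CB * (z-a)^(-2:ℤ) := by
    intro z
    have hc : ((z-a)^(2:ℕ) : ℂ) = (z-a)^(2:ℤ) := by norm_cast
    rw [div_eq_mul_inv, zpow_neg, ← hc]
  have e1 : ∀ z : ℂ, CA/(z-a) = CA * (z-a)^(-1:ℤ) := by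
    intro z
    have hc : ((z-a)^(1:ℕ) : ℂ) = (z-a)^(1:ℤ) := by norm_cast
    rw [div_eq_mul_inv, zpow_neg, ← hc, pow_one]
  have e0 : ∀ z : ℂ, CG/(z-b) = CG * (z-b)^(-1:ℤ) := by
    intro z
    have hc : ((z-b)^(1:ℕ) : ℂ) = (z-b)^(1:ℤ) := by norm_cast
    rw [div_eq_mul_inv, zpow_neg, ← hc, pow_one]
  have i4 : CircleIntegrable (fun z : ℂ => CE/(z-a)^4) 0 1 := by
    simp only [e4]; exact hci a hsph_a (-4) CE
  have i3 : CircleIntegrable (fun z : ℂ => CD/(z-a)^3) 0 1 := by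
    simp only [e3]; exact hci a hsph_a (-3) CD
  have i2 : CircleIntegrable (fun z : ℂ => CB/(z-a)^2) 0 1 := by
    simp only [e2]; exact hci a hsph_a (-2) CB
  have i1 : CircleIntegrable (fun z : ℂ => CA/(z-a)) 0 1 := by
    simp only [e1]; exact hci a hsph_a (-1) CA
  have i0 : CircleIntegrable (fun z : ℂ => CG/(z-b)) 0 1 := by
    simp only [e0]; exact hci b hsph_b (-1) CG
  have hint : (∮ ξ in C((0 : ℂ), 1),
          (y1 : ℂ) *
          ((y2 : ℂ) * (1 + (h : ℂ) * (r : ℂ) * ξ) * (1 + (h : ℂ) / ((r : ℂ) * ξ)) /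
            (((y2 : ℂ) + (h : ℂ) * (r : ℂ) * ξ) * ((y2 : ℂ) + (h : ℂ) / ((r : ℂ) * ξ)))) *
          (((1 - y2) ^ 2 * h / y2 ^ 3 : ℝ) : ℂ) *
          (ξ / (ξ + (h : ℂ) / ((y2 : ℂ) * (r : ℂ))) ^ 3))
      = CA * (2 * (Real.pi:ℂ) * Complex.I) := by
    have ir1 : CircleIntegrable (fun z : ℂ => CA/(z-a) + CG/(z-b)) 0 1 := i1.add i0
    have ir2 : CircleIntegrable (fun z : ℂ => CB/(z-a)^2 + (CA/(z-a) + CG/(z-b))) 0 1 :=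
      i2.add ir1
    have ir3 : CircleIntegrable
        (fun z : ℂ => CD/(z-a)^3 + (CB/(z-a)^2 + (CA/(z-a) + CG/(z-b)))) 0 1 := i3.add ir2
    rw [circleIntegral.integral_congr zero_le_one heq]
    rw [circleIntegral_add' i4 ir3, circleIntegral_add' i3 ir2, circleIntegral_add' i2 ir1,
        circleIntegral_add' i1 i0]
    have v4 : (∮ z in C((0:ℂ),1), CE/(z-a)^4) = 0 := by
      simp only [e4]
      rw [circleIntegral.integral_const_mul,
        circleIntegral.integral_sub_zpow_of_ne (by decide) 0 a 1, mul_zero]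
    have v3 : (∮ z in C((0:ℂ),1), CD/(z-a)^3) = 0 := by
      simp only [e3]
      rw [circleIntegral.integral_const_mul,
        circleIntegral.integral_sub_zpow_of_ne (by decide) 0 a 1, mul_zero]
    have v2 : (∮ z in C((0:ℂ),1), CB/(z-a)^2) = 0 := by
      simp only [e2]
      rw [circleIntegral.integral_const_mul,
        circleIntegral.integral_sub_zpow_of_ne (by decide) 0 a 1, mul_zero]
    have v1 : (∮ z in C((0:ℂ),1), CA/(z-a)) = CA * (2 * (Real.pi:ℂ) * Complex.I) := by
      simp only [div_eq_mul_inv]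
      rw [circleIntegral.integral_const_mul, circleIntegral.integral_sub_inv_of_mem_ball hmem_a]
    have v0 : (∮ z in C((0:ℂ),1), CG/(z-b)) = 0 := by
      apply Complex.circleIntegral_eq_zero_of_differentiable_on_off_countable zero_le_one
        Set.countable_empty
      · apply ContinuousOn.div continuousOn_const
        · exact (continuous_id.sub continuous_const).continuousOn
        · intro z hz
          refine sub_ne_zero.2 fun hc => ?_
          rw [mem_closedBall, Complex.dist_eq, sub_zero] at hz
          rw [hc] at hz
          exact absurd hz (not_le.2 habs_b)
      · intro z hz
        apply DifferentiableAt.div (differentiableAt_const _)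
          ((differentiableAt_id.sub (differentiableAt_const _)))
        refine sub_ne_zero.2 fun hc => ?_
        rw [mem_diff, mem_ball, Complex.dist_eq, sub_zero] at hz
        rw [hc] at hz
        exact absurd hz.1 (not_lt.2 habs_b.le)
    rw [v4, v3, v2, v1, v0]
    ring
  rw [hint]
  have h2pi : (2 * (Real.pi:ℂ) * Complex.I) ≠ 0 := by
    simp [Real.pi_ne_zero, Complex.I_ne_zero]
  rw [mul_comm CA, ← mul_assoc, one_div, inv_mul_cancel₀ h2pi, one_mul]
  have he2 : (h:ℂ)^2 = (y1:ℂ) + (y2:ℂ) - (y1:ℂ)*(y2:ℂ) := by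
    have hcast : ((h^2 : ℝ):ℂ) = (((y1 + y2 - y1*y2 : ℝ)):ℂ) := by rw [hh2]
    push_cast at hcast; exact hcast
  have hfac2 : (y2:ℂ)^2 - (h:ℂ)^2 = ((y2:ℂ)-1)*((y1:ℂ)+(y2:ℂ)) := by
    rw [he2]; ring
  have hfac1 : (y2:ℂ) - (h:ℂ)^2 = (y1:ℂ)*((y2:ℂ)-1) := by
    rw [he2]; ring
  have hy21 : ((y2:ℂ)-1) ≠ 0 := by
    have h0 : ((y2 - 1 : ℝ):ℂ) ≠ 0 := Complex.ofReal_ne_zero.2 (by linarith)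
    push_cast at h0; exact h0
  have hy12 : ((y1:ℂ)+(y2:ℂ)) ≠ 0 := by
    have h0 : ((y1+y2 : ℝ):ℂ) ≠ 0 := Complex.ofReal_ne_zero.2 (by positivity)
    push_cast at h0; exact h0
  rw [hCA]
  have hnum : (((y1:ℂ)*(y2:ℂ)^2*(h:ℂ)^4*(r:ℂ) + -1*(y1:ℂ)*(y2:ℂ)^3*(h:ℂ)^2*(r:ℂ) + -3*(y1:ℂ)*(y2:ℂ)^3*(h:ℂ)^4*(r:ℂ) + 3*(y1:ℂ)*(y2:ℂ)^4*(h:ℂ)^2*(r:ℂ) + 3*(y1:ℂ)*(y2:ℂ)^4*(h:ℂ)^4*(r:ℂ) + -3*(y1:ℂ)*(y2:ℂ)^5*(h:ℂ)^2*(r:ℂ) + -1*(y1:ℂ)*(y2:ℂ)^5*(h:ℂ)^4*(r:ℂ) + (y1:ℂ)*(y2:ℂ)^6*(h:ℂ)^2*(r:ℂ)))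
      = (y1:ℂ)*((y2:ℂ)-1)^3*((y2:ℂ)-(h:ℂ)^2)*(h:ℂ)^2*(y2:ℂ)^2*(r:ℂ) := by ring
  rw [hnum, hfac1, hfac2]
  push_cast
  field_simp

theorem stmt12 (y1 y2 h : ℝ) (hy1 : 0 < y1) (hy2 : 1 < y2)
    (hpos : 0 < y1 + y2 - y1 * y2) (hh : h = Real.sqrt (y1 + y2 - y1 * y2)) :
    Tendsto (fun r : ℝ =>
      (1 / (2 * (Real.pi : ℂ) * Complex.I)) *
        ∮ ξ in C((0 : ℂ), 1),
          (y1 : ℂ) *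
          ((y2 : ℂ) * (1 + (h : ℂ) * (r : ℂ) * ξ) * (1 + (h : ℂ) / ((r : ℂ) * ξ)) /
            (((y2 : ℂ) + (h : ℂ) * (r : ℂ) * ξ) * ((y2 : ℂ) + (h : ℂ) / ((r : ℂ) * ξ)))) *
          (((1 - y2) ^ 2 * h / y2 ^ 3 : ℝ) : ℂ) *
          (ξ / (ξ + (h : ℂ) / ((y2 : ℂ) * (r : ℂ))) ^ 3))
      (nhdsWithin 1 (Set.Ioi 1))
      (nhds ((y1 ^ 2 * y2 ^ 2 * h ^ 2 / (y1 + y2) ^ 4 : ℝ) : ℂ)) := by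
  have hhpos : 0 < h := by rw [hh]; exact Real.sqrt_pos.2 hpos
  have hh2 : h ^ 2 = y1 + y2 - y1 * y2 := by rw [hh]; exact Real.sq_sqrt hpos.le
  have hhy2 : h < y2 := by nlinarith
  have h1y : (1:ℝ) < y2 / h := by
    rw [lt_div_iff₀ hhpos]; linarith
  have hG : Tendsto (fun r : ℝ => (r : ℂ) * ((y1 ^ 2 * y2 ^ 2 * h ^ 2 / (y1 + y2) ^ 4 : ℝ) : ℂ))
      (nhdsWithin 1 (Set.Ioi 1)) (nhds ((y1 ^ 2 * y2 ^ 2 * h ^ 2 / (y1 + y2) ^ 4 : ℝ) : ℂ)) := by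
    have hc : Continuous
        (fun r : ℝ => (r : ℂ) * ((y1 ^ 2 * y2 ^ 2 * h ^ 2 / (y1 + y2) ^ 4 : ℝ) : ℂ)) :=
      Complex.continuous_ofReal.mul continuous_const
    have htd := (hc.tendsto 1).mono_left (nhdsWithin_le_nhds (s := Set.Ioi (1:ℝ)))
    simpa using htd
  refine Tendsto.congr' ?_ hG
  filter_upwards [Ioo_mem_nhdsGT_of_mem (Set.left_mem_Ico.2 h1y)] with r hrr
  have hr1 : 1 < r := hrr.1
  have hry : h * r < y2 := by
    have h0 := hrr.2
    rw [lt_div_iff₀ hhpos] at h0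
    linarith
  exact (key12 y1 y2 h r hy1 hy2 hhpos hh2 hr1 hry).symm
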